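/- arXiv:2506.20569 — 2 statements merged into one kernel-verified Lean document; each statement's English description precedes it below -/
import Mathlib

section
/- Let H be a Hilbert space, (e_k)_{k∈ℕ} a Riesz basis of H, and (f_k)_{k∈ℕ} a complete system in H with ∑_k ‖f_k - e_k‖² < ∞ and (f_k) ω-linearly independent. Then (f_k) is a Riesz basis of H. -/
open MeasureTheory

/-- A sequence is a Riesz basis of a Hilbert space if it is the image of a
Hilbert (orthonormal) basis under a bounded invertible operator. -/
def IsRieszBasis (H : Type*) [NormedAddCommGroup H] [InnerProductSpace ℂ H]
    [CompleteSpace H] (f : ℕ → H) : Prop :=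
  ∃ (e : HilbertBasis ℕ ℂ H) (T : H ≃L[ℂ] H), ∀ k, f k = T (e k)

/-- Cauchy–Schwarz for infinite sums of nonnegative reals. -/
lemma tsum_mul_le_sqrt_mul_sqrt (a b : ℕ → ℝ) (ha : ∀ k, 0 ≤ a k) (hb : ∀ k, 0 ≤ b k)
    (ha2 : Summable fun k => a k ^ 2) (hb2 : Summable fun k => b k ^ 2) :
    ∑' k, a k * b k ≤ Real.sqrt (∑' k, a k ^ 2) * Real.sqrt (∑' k, b k ^ 2) := by
  have hsum : Summable fun k => a k * b k := by
    refine Summable.of_nonneg_of_le (fun k => mul_nonneg (ha k) (hb k))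
      (fun k => ?_) ((ha2.add hb2).mul_left (1/2))
    have := sq_nonneg (a k - b k)
    nlinarith [ha k, hb k]
  refine Summable.tsum_le_of_sum_le hsum fun s => ?_
  have h1 : (∑ i ∈ s, a i * b i) ^ 2 ≤ (∑ i ∈ s, a i ^ 2) * ∑ i ∈ s, b i ^ 2 :=
    Finset.sum_mul_sq_le_sq_mul_sq s a b
  have h2 : ∑ i ∈ s, a i ^ 2 ≤ ∑' i, a i ^ 2 :=
    Summable.sum_le_tsum s (fun i _ => sq_nonneg _) ha2
  have h3 : ∑ i ∈ s, b i ^ 2 ≤ ∑' i, b i ^ 2 :=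
    Summable.sum_le_tsum s (fun i _ => sq_nonneg _) hb2
  have h4 : 0 ≤ ∑ i ∈ s, a i * b i :=
    Finset.sum_nonneg fun i _ => mul_nonneg (ha i) (hb i)
  have h5 : 0 ≤ ∑' i, a i ^ 2 := tsum_nonneg fun i => sq_nonneg _
  have h6 : 0 ≤ ∑' i, b i ^ 2 := tsum_nonneg fun i => sq_nonneg _
  rw [← Real.sqrt_mul h5]
  rw [Real.le_sqrt h4 (mul_nonneg h5 h6)]
  calc (∑ i ∈ s, a i * b i) ^ 2 ≤ (∑ i ∈ s, a i ^ 2) * ∑ i ∈ s, b i ^ 2 := h1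
    _ ≤ (∑' i, a i ^ 2) * ∑' i, b i ^ 2 := by
        apply mul_le_mul h2 h3 (Finset.sum_nonneg fun i _ => sq_nonneg _) h5

/-- `1 + G` is surjective when it is injective and `G` has finite rank. -/
lemma one_add_finiteRank_surjective {V : Type*} [AddCommGroup V] [Module ℂ V]
    (G : V →ₗ[ℂ] V) (hfd : FiniteDimensional ℂ (LinearMap.range G))
    (hinj : Function.Injective fun x => x + G x) :
    Function.Surjective fun x => x + G x := by
  intro y
  set W := LinearMap.range G with hW
  have hmem : ∀ x ∈ W, ((LinearMap.id : V →ₗ[ℂ] V) + G) x ∈ W := by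
    intro x hx
    simpa using W.add_mem hx (LinearMap.mem_range_self _ x)
  set S : W →ₗ[ℂ] W := ((LinearMap.id : V →ₗ[ℂ] V) + G).restrict hmem with hS
  have hSinj : Function.Injective S := by
    intro u v huv
    have h1 : (u : V) + G u = (v : V) + G v := by
      have := congrArg Subtype.val huv
      simpa [hS, LinearMap.restrict_apply] using this
    exact Subtype.ext (hinj h1)
  have hSsurj : Function.Surjective S :=
    (LinearMap.injective_iff_surjective (f := S)).mp hSinj
  obtain ⟨w, hw⟩ := hSsurj ⟨G y, LinearMap.mem_range_self _ y⟩
  have hw' : (w : V) + G w = G y := by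
    have := congrArg Subtype.val hw
    simpa [hS, LinearMap.restrict_apply] using this
  refine ⟨y - w, ?_⟩
  have : (y - (w:V)) + G (y - w) = y := by
    rw [map_sub, ← hw']
    abel
  simpa using this

theorem stmt_14 (H : Type*) [NormedAddCommGroup H] [InnerProductSpace ℂ H]
    [CompleteSpace H] (e f : ℕ → H)
    (he : IsRieszBasis H e)
    (hcomplete : (Submodule.span ℂ (Set.range f)).topologicalClosure = ⊤)
    (hclose : Summable (fun k => ‖f k - e k‖ ^ 2))
    (hω : ∀ c : ℕ → ℂ, HasSum (fun k => c k • f k) 0 → ∀ k, c k = 0) :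
    IsRieszBasis H f := by
  classical
  obtain ⟨ε, T, hT⟩ := he
  set g : ℕ → H := fun k => T.symm (f k - e k) with hg
  -- quadratic summability of the perturbation
  have hgsum : Summable fun k => ‖g k‖ ^ 2 := by
    refine Summable.of_nonneg_of_le (fun k => by positivity) (fun k => ?_)
      (hclose.mul_left (‖(T.symm : H →L[ℂ] H)‖ ^ 2))
    have hb : ‖g k‖ ≤ ‖(T.symm : H →L[ℂ] H)‖ * ‖f k - e k‖ :=
      (T.symm : H →L[ℂ] H).le_opNorm _
    have h0 : (0:ℝ) ≤ ‖g k‖ := norm_nonneg _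
    nlinarith [norm_nonneg (f k - e k), norm_nonneg ((T.symm : H →L[ℂ] H))]
  -- choose a tail cutoff
  obtain ⟨N, hN⟩ : ∃ N, (∑' k, ‖g (k + N)‖ ^ 2) < 1/4 := by
    have h := tendsto_sum_nat_add (fun k => ‖g k‖ ^ 2)
    exact (h.eventually (gt_mem_nhds (by norm_num : (0:ℝ) < 1/4))).exists
  -- basic facts about coefficients
  have hrepr2 : ∀ x : H, Summable fun i => ‖(ε.repr x : ℕ → ℂ) i‖ ^ 2 := by
    intro x
    have := Memℓp.summable (p := 2) (by norm_num) (lp.memℓp (ε.repr x))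
    have h2 : ((2:ENNReal)).toReal = ((2:ℕ):ℝ) := by norm_num
    rw [h2] at this
    simpa [Real.rpow_natCast] using this
  have hx2 : ∀ x : H, ∑' i, ‖(ε.repr x : ℕ → ℂ) i‖ ^ 2 = ‖x‖ ^ 2 := by
    intro x
    have h := lp.norm_rpow_eq_tsum (p := 2) (by norm_num) (ε.repr x)
    have h2 : ((2:ENNReal)).toReal = ((2:ℕ):ℝ) := by norm_num
    rw [h2] at h
    simp only [Real.rpow_natCast] at h
    rw [← h, ε.repr.norm_map]
  have hshift2 : ∀ x : H, Summable fun k => ‖(ε.repr x : ℕ → ℂ) (k + N)‖ ^ 2 := fun x =>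
    (hrepr2 x).comp_injective (add_left_injective N)
  have hgshift2 : Summable fun k => ‖g (k + N)‖ ^ 2 :=
    hgsum.comp_injective (add_left_injective N)
  have hshift_le : ∀ x : H, ∑' k, ‖(ε.repr x : ℕ → ℂ) (k + N)‖ ^ 2 ≤ ‖x‖ ^ 2 := by
    intro x
    have h := Summable.sum_add_tsum_nat_add N (hrepr2 x)
    have hnn : 0 ≤ ∑ i ∈ Finset.range N, ‖(ε.repr x : ℕ → ℂ) i‖ ^ 2 :=
      Finset.sum_nonneg fun i _ => sq_nonneg _
    rw [hx2 x] at h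
    linarith
  -- summability of the defining series of K
  have habs : ∀ x : H,
      Summable fun k => ‖(ε.repr x : ℕ → ℂ) (k + N)‖ * ‖g (k + N)‖ := by
    intro x
    refine Summable.of_nonneg_of_le (fun k => by positivity) (fun k => ?_)
      (((hshift2 x).add hgshift2).mul_left (1/2))
    nlinarith [sq_nonneg (‖(ε.repr x : ℕ → ℂ) (k + N)‖ - ‖g (k + N)‖)]
  have key : ∀ x : H, Summable fun k => (ε.repr x : ℕ → ℂ) (k + N) • g (k + N) := by
    intro x
    exact Summable.of_norm (by simpa [norm_smul] using habs x)
  -- the tail operator K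
  set Klin : H →ₗ[ℂ] H :=
    { toFun := fun x => ∑' k, (ε.repr x : ℕ → ℂ) (k + N) • g (k + N)
      map_add' := by
        intro x y
        show (∑' k, (ε.repr (x + y) : ℕ → ℂ) (k + N) • g (k + N)) =
          (∑' k, (ε.repr x : ℕ → ℂ) (k + N) • g (k + N)) +
          ∑' k, (ε.repr y : ℕ → ℂ) (k + N) • g (k + N)
        have : ∀ k, (ε.repr (x + y) : ℕ → ℂ) (k + N) • g (k + N) =
            (ε.repr x : ℕ → ℂ) (k + N) • g (k + N) +
            (ε.repr y : ℕ → ℂ) (k + N) • g (k + N) := by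
          intro k
          rw [map_add, lp.coeFn_add]
          simp [add_smul]
        rw [tsum_congr this, Summable.tsum_add (key x) (key y)]
      map_smul' := by
        intro c x
        show (∑' k, (ε.repr (c • x) : ℕ → ℂ) (k + N) • g (k + N)) =
          c • ∑' k, (ε.repr x : ℕ → ℂ) (k + N) • g (k + N)
        have : ∀ k, (ε.repr (c • x) : ℕ → ℂ) (k + N) • g (k + N) =
            c • ((ε.repr x : ℕ → ℂ) (k + N) • g (k + N)) := by
          intro k
          rw [_root_.map_smul, lp.coeFn_smul]
          simp [smul_smul]
        rw [tsum_congr this, Summable.tsum_const_smul c (key x)] } with hKlin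
  have hKbound : ∀ x : H, ‖Klin x‖ ≤ (1/2) * ‖x‖ := by
    intro x
    have h1 : ‖Klin x‖ ≤ ∑' k, ‖(ε.repr x : ℕ → ℂ) (k + N) • g (k + N)‖ :=
      norm_tsum_le_tsum_norm (by simpa [norm_smul] using habs x)
    have h2 : ∑' k, ‖(ε.repr x : ℕ → ℂ) (k + N) • g (k + N)‖ =
        ∑' k, ‖(ε.repr x : ℕ → ℂ) (k + N)‖ * ‖g (k + N)‖ :=
      tsum_congr fun k => norm_smul _ _
    have h3 := tsum_mul_le_sqrt_mul_sqrt (fun k => ‖(ε.repr x : ℕ → ℂ) (k + N)‖)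
      (fun k => ‖g (k + N)‖) (fun k => norm_nonneg _) (fun k => norm_nonneg _)
      (hshift2 x) hgshift2
    have h4 : Real.sqrt (∑' k, ‖(ε.repr x : ℕ → ℂ) (k + N)‖ ^ 2) ≤ ‖x‖ := by
      rw [show ‖x‖ = Real.sqrt (‖x‖ ^ 2) by rw [Real.sqrt_sq (norm_nonneg x)]]
      exact Real.sqrt_le_sqrt (hshift_le x)
    have h5 : Real.sqrt (∑' k, ‖g (k + N)‖ ^ 2) ≤ 1/2 := by
      rw [show (1/2 : ℝ) = Real.sqrt (1/4) by rw [show (1/4 : ℝ) = (1/2)^2 by norm_num,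
        Real.sqrt_sq (by norm_num)]]
      exact Real.sqrt_le_sqrt hN.le
    calc ‖Klin x‖ ≤ ∑' k, ‖(ε.repr x : ℕ → ℂ) (k + N)‖ * ‖g (k + N)‖ := by rw [← h2]; exact h1
      _ ≤ Real.sqrt (∑' k, ‖(ε.repr x : ℕ → ℂ) (k + N)‖ ^ 2) *
            Real.sqrt (∑' k, ‖g (k + N)‖ ^ 2) := h3
      _ ≤ ‖x‖ * (1/2) := by
          apply mul_le_mul h4 h5 (Real.sqrt_nonneg _) (norm_nonneg x)
      _ = (1/2) * ‖x‖ := mul_comm _ _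
  set K : H →L[ℂ] H := Klin.mkContinuous (1/2) hKbound with hK
  have hKnorm : ‖K‖ ≤ 1/2 := LinearMap.mkContinuous_norm_le _ (by norm_num) _
  -- the finite rank operator F
  set Fop : H →L[ℂ] H :=
    ∑ k ∈ Finset.range N, (innerSL ℂ (ε k)).smulRight (g k) with hFop
  have hFapply : ∀ x : H, Fop x = ∑ k ∈ Finset.range N, (inner ℂ (ε k) x : ℂ) • g k := by
    intro x
    rw [hFop, ContinuousLinearMap.sum_apply]
    exact Finset.sum_congr rfl fun k _ => by
      rw [ContinuousLinearMap.smulRight_apply, innerSL_apply_apply]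
  -- B = 1 + K is invertible
  set B : H →L[ℂ] H := 1 + K with hB
  have hBunit : IsUnit B := by
    have h1 : ‖-K‖ < 1 := by rw [norm_neg]; linarith
    have := isUnit_one_sub_of_norm_lt_one h1
    simpa [sub_neg_eq_add] using this
  obtain ⟨u, hu⟩ := hBunit
  -- the total operator
  set A : H →L[ℂ] H := (T : H →L[ℂ] H).comp (B + Fop) with hA
  -- orthonormality
  have horth : ∀ i j : ℕ, (inner ℂ (ε i) (ε j) : ℂ) = if i = j then 1 else 0 :=
    orthonormal_iff_ite.mp ε.orthonormal
  have hreprε : ∀ i j : ℕ, (ε.repr (ε j) : ℕ → ℂ) i = if i = j then 1 else 0 := by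
    intro i j
    rw [ε.repr_apply_apply]
    exact horth i j
  -- A maps the Hilbert basis to f
  have hAε : ∀ j, A (ε j) = f j := by
    intro j
    have hKε : K (ε j) = if N ≤ j then g j else 0 := by
      show (∑' k, (ε.repr (ε j) : ℕ → ℂ) (k + N) • g (k + N)) = _
      by_cases hj : N ≤ j
      · rw [if_pos hj]
        rw [tsum_eq_single (j - N) ?_]
        · rw [hreprε, if_pos (by omega), one_smul, Nat.sub_add_cancel hj]
        · intro k hk
          rw [hreprε, if_neg (by omega), zero_smul]
      · rw [if_neg hj]
        have : ∀ k, (ε.repr (ε j) : ℕ → ℂ) (k + N) • g (k + N) = 0 := by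
          intro k
          rw [hreprε, if_neg (by omega), zero_smul]
        rw [tsum_congr this, tsum_zero]
    have hFε : Fop (ε j) = if N ≤ j then 0 else g j := by
      rw [hFapply]
      have : ∀ k ∈ Finset.range N, (inner ℂ (ε k) (ε j) : ℂ) • g k =
          if k = j then g k else 0 := by
        intro k _
        rw [horth]
        split <;> simp
      rw [Finset.sum_congr rfl this, Finset.sum_ite_eq' (Finset.range N) j g]
      rcases le_or_gt N j with h | h
      · rw [if_neg (by simp [Finset.mem_range]; omega), if_pos h]
      · rw [if_pos (Finset.mem_range.mpr h), if_neg (by omega)]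
    have h1 : (B + Fop) (ε j) = ε j + g j := by
      rw [ContinuousLinearMap.add_apply, hB, ContinuousLinearMap.add_apply,
        ContinuousLinearMap.one_apply, hKε, hFε]
      split <;> abel
    rw [hA, ContinuousLinearMap.comp_apply, h1]
    rw [map_add]
    have : T (g j) = f j - e j := by rw [hg]; exact T.apply_symm_apply _
    rw [ContinuousLinearEquiv.coe_coe] at *
    rw [this, ← hT j]
    abel
  -- injectivity of A
  have hAinj : Function.Injective A := by
    have hker : ∀ x : H, A x = 0 → x = 0 := by
      intro x hx
      have h1 : HasSum (fun i => A ((ε.repr x : ℕ → ℂ) i • ε i)) (A x) :=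
        (ε.hasSum_repr x).mapL A
      have h2 : HasSum (fun i => (ε.repr x : ℕ → ℂ) i • f i) 0 := by
        rw [← hx]
        refine h1.congr_fun fun i => ?_
        rw [A.map_smul, hAε]
      have h3 : ∀ i, (ε.repr x : ℕ → ℂ) i = 0 := hω _ h2
      have h4 := ε.hasSum_repr x
      have h5 : HasSum (fun i : ℕ => (0 : H)) x := by
        refine h4.congr_fun fun i => ?_
        rw [h3 i, zero_smul]
      exact (h5.unique hasSum_zero)
    intro x y hxy
    have h0 : A (x - y) = 0 := by rw [map_sub, hxy, sub_self]
    exact sub_eq_zero.mp (hker _ h0)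
  -- surjectivity of A via finite-rank perturbation
  set G : H →L[ℂ] H := ↑u⁻¹ * Fop with hG
  have hBG : B * G = Fop := by
    rw [hG, ← hu, ← mul_assoc, u.mul_inv, one_mul]
  have hfactor : ∀ x : H, (B + Fop) x = B (x + G x) := by
    intro x
    rw [map_add]
    have : B (G x) = Fop x := by
      have := congrArg (fun (φ : H →L[ℂ] H) => φ x) hBG
      simpa using this
    rw [this, ContinuousLinearMap.add_apply]
  have hBFinj : Function.Injective (B + Fop) := by
    intro x y hxy
    have : A x = A y := by
      rw [hA, ContinuousLinearMap.comp_apply, ContinuousLinearMap.comp_apply, hxy]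
    exact hAinj this
  have hJinj : Function.Injective fun x : H => x + G x := by
    intro x y hxy
    apply hBFinj
    rw [hfactor, hfactor]
    exact congrArg B hxy
  have hGfd : FiniteDimensional ℂ (LinearMap.range (G : H →ₗ[ℂ] H)) := by
    have hle : LinearMap.range (G : H →ₗ[ℂ] H) ≤
        Submodule.span ℂ ((fun k => (↑u⁻¹ : H →L[ℂ] H) (g k)) '' Set.Iio N) := by
      rintro _ ⟨x, rfl⟩
      have : G x = ∑ k ∈ Finset.range N, (inner ℂ (ε k) x : ℂ) • (↑u⁻¹ : H →L[ℂ] H) (g k) := by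
        rw [hG]
        show (↑u⁻¹ : H →L[ℂ] H) (Fop x) = _
        rw [hFapply, map_sum]
        exact Finset.sum_congr rfl fun k _ => ContinuousLinearMap.map_smul _ _ _
      rw [ContinuousLinearMap.coe_coe, this]
      refine Submodule.sum_mem _ fun k hk => Submodule.smul_mem _ _ (Submodule.subset_span ?_)
      exact ⟨k, Finset.mem_range.mp hk, rfl⟩
    have hfin : ((fun k => (↑u⁻¹ : H →L[ℂ] H) (g k)) '' Set.Iio N).Finite :=
      (Set.finite_Iio N).image _
    haveI := FiniteDimensional.span_of_finite ℂ hfin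
    exact Submodule.finiteDimensional_of_le hle
  have hJsurj : Function.Surjective fun x : H => x + G x := by
    have h := one_add_finiteRank_surjective (G : H →ₗ[ℂ] H) hGfd
      (by simpa using hJinj)
    simpa using h
  have hA0surj : Function.Surjective (B + Fop) := by
    intro y
    obtain ⟨x, hx⟩ := hJsurj ((↑u⁻¹ : H →L[ℂ] H) y)
    refine ⟨x, ?_⟩
    rw [hfactor]
    simp only at hx
    rw [hx]
    have hBu : B * (↑u⁻¹ : H →L[ℂ] H) = 1 := by rw [← hu]; exact u.mul_inv
    have := congrArg (fun (φ : H →L[ℂ] H) => φ y) hBu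
    simpa using this
  have hAsurj : Function.Surjective A := by
    intro y
    obtain ⟨x, hx⟩ := hA0surj (T.symm y)
    refine ⟨x, ?_⟩
    rw [hA, ContinuousLinearMap.comp_apply, hx]
    exact T.apply_symm_apply y
  have hker : A.ker = ⊥ := (LinearMap.ker_eq_bot (f := (A : H →ₗ[ℂ] H))).mpr hAinj
  have hrange : A.range = ⊤ := (LinearMap.range_eq_top (f := (A : H →ₗ[ℂ] H))).mpr hAsurj
  refine ⟨ε, ContinuousLinearEquiv.ofBijective A hker hrange, fun k => ?_⟩
  rw [ContinuousLinearEquiv.coeFn_ofBijective]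
  exact (hAε k).symm
end

section
/- Suppose q ∈ L²(0,π) and for every n ∈ ℕ, ∑_{k=1}^{n_p} sin(n·a_k) ≠ 0, and suppose the values ∫₀^π N(x)·cos(nx) dx are known for all n ∈ ℕ, where N satisfies ∫₀^π N(x)·cos(ρx) dx = -sin(ρπ)·∑_k ∫₀^{a_k} q(t)·sin(ρ(a_k - t)) dt + (∑_k sin(ρa_k))·∫₀^π q(t)·sin(ρ(π - t)) dt for all real ρ. Then the Fourier sine coefficients c_n = ∫₀^π q(t)·sin(n(π - t)) dt are uniquely determined by c_n = (∑_k sin(n·a_k))^{-1}·∫₀^π N(x)·cos(nx) dx, and hence q is uniquely determined in L²(0,π). -/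
open MeasureTheory Real Set

lemma aux_sine_complete (g : ℝ → ℝ) (hg : MemLp g 2 (volume.restrict (Set.Ioo 0 π)))
    (h : ∀ n : ℕ, 1 ≤ n → ∫ t in (0:ℝ)..π, g t * Real.sin (n * t) = 0) :
    ∀ᵐ t ∂(volume.restrict (Set.Ioo 0 π)), g t = 0 := by
  haveI : Fact (0 < 2 * π) := ⟨by positivity⟩
  set μ₀ := volume.restrict (Set.Ioo (0:ℝ) π) with hμ₀
  have hIooIoc : volume.restrict (Set.Ioo (0:ℝ) π) = volume.restrict (Set.Ioc 0 π) :=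
    Measure.restrict_congr_set Ioo_ae_eq_Ioc
  obtain ⟨d, hdsm, hgd⟩ : ∃ d, StronglyMeasurable d ∧ g =ᵐ[μ₀] d :=
    ⟨hg.aestronglyMeasurable.mk g, hg.aestronglyMeasurable.stronglyMeasurable_mk,
      hg.aestronglyMeasurable.ae_eq_mk⟩
  have hdmeas : Measurable d := hdsm.measurable
  have hdmem : MemLp d 2 μ₀ := hg.ae_eq hgd
  have hgd' : g =ᵐ[volume.restrict (Set.Ioc 0 π)] d := hIooIoc ▸ hgd
  have hgint : ∀ n : ℕ, 1 ≤ n → ∫ t in (0:ℝ)..π, d t * Real.sin (n * t) = 0 := by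
    intro n hn
    refine Eq.trans ?_ (h n hn)
    apply intervalIntegral.integral_congr_ae
    have h2 := (ae_restrict_iff' measurableSet_Ioc).mp hgd'
    filter_upwards [h2] with x hx hx'
    rw [Set.uIoc_of_le pi_pos.le] at hx'
    rw [hx hx']
  have hint : ∀ n : ℤ, ∫ t in (0:ℝ)..π, d t * Real.sin (n * t) = 0 := by
    intro n
    rcases lt_trichotomy n 0 with hneg | rfl | hpos
    · have h1 := hgint (-n).toNat (by omega)
      have h2 : (((-n).toNat : ℕ) : ℝ) = -(n : ℝ) := by
        have h3 := Int.toNat_of_nonneg (by omega : (0:ℤ) ≤ -n)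
        exact_mod_cast congrArg (fun z : ℤ => (z : ℝ)) h3
      rw [h2] at h1
      simpa [neg_mul, Real.sin_neg, mul_neg, intervalIntegral.integral_neg] using h1
    · simp
    · have h1 := hgint n.toNat (by omega)
      have h2 : ((n.toNat : ℕ) : ℝ) = (n : ℝ) := by
        have h3 := Int.toNat_of_nonneg (by omega : (0:ℤ) ≤ n)
        exact_mod_cast congrArg (fun z : ℤ => (z : ℝ)) h3
      rwa [h2] at h1
  -- odd extension
  set fR : ℝ → ℝ := fun t =>
    Set.indicator (Set.Ioo 0 π) d t - Set.indicator (Set.Ioo (-π) 0) (fun s => d (-s)) t with hfRdef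
  have hfRmeas : Measurable fR :=
    (hdmeas.indicator measurableSet_Ioo).sub
      ((hdmeas.comp measurable_neg).indicator measurableSet_Ioo)
  have hfRodd : ∀ t, fR (-t) = -fR t := by
    intro t
    simp only [hfRdef, Set.indicator_apply, Set.mem_Ioo, neg_neg]
    have h1 : ((0:ℝ) < -t ∧ -t < π) ↔ (-π < t ∧ t < 0) := by
      constructor <;> rintro ⟨u, v⟩ <;> constructor <;> linarith
    have h2 : (-π < -t ∧ -t < 0) ↔ ((0:ℝ) < t ∧ t < π) := by
      constructor <;> rintro ⟨u, v⟩ <;> constructor <;> linarith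
    simp only [h1, h2]
    by_cases hc1 : (0:ℝ) < t ∧ t < π <;> by_cases hc2 : -π < t ∧ t < 0 <;>
      simp [hc1, hc2] <;>
      (exfalso; obtain ⟨u, v⟩ := hc1; obtain ⟨u', v'⟩ := hc2; linarith)
  have hfRIoo : ∀ t ∈ Set.Ioo (0:ℝ) π, fR t = d t := by
    intro t ht
    have ht' : t ∉ Set.Ioo (-π) (0:ℝ) := by
      obtain ⟨u, v⟩ := ht; simp only [Set.mem_Ioo, not_and_or]; right; linarith
    simp [hfRdef, Set.indicator_of_mem ht, Set.indicator_of_notMem ht']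
  have hfRmem : MemLp fR 2 volume := by
    apply MemLp.sub
    · exact (memLp_indicator_iff_restrict measurableSet_Ioo).mpr hdmem
    · apply (memLp_indicator_iff_restrict measurableSet_Ioo).mpr
      have hpre : Neg.neg ⁻¹' (Set.Ioo (0:ℝ) π) = Set.Ioo (-π) 0 := by
        ext x
        simp only [Set.mem_preimage, Set.mem_Ioo]
        constructor <;> rintro ⟨u, v⟩ <;> constructor <;> linarith
      have hmap : Measure.map Neg.neg (volume.restrict (Set.Ioo (-π) (0:ℝ))) = μ₀ := by
        rw [hμ₀, show volume.restrict (Set.Ioo (0:ℝ) π)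
            = (Measure.map Neg.neg volume).restrict (Set.Ioo (0:ℝ) π) from by
          rw [Measure.map_neg_eq_self]]
        rw [Measure.restrict_map measurable_neg measurableSet_Ioo, hpre]
      have hd2 : MemLp d 2 (Measure.map Neg.neg (volume.restrict (Set.Ioo (-π) (0:ℝ)))) := by
        rw [hmap]; exact hdmem
      exact (memLp_map_measure_iff hdsm.aestronglyMeasurable
        measurable_neg.aemeasurable).mp hd2
  -- complexify and lift to the circle
  set f : ℝ → ℂ := fun t => (fR t : ℂ) with hfdef
  have hfmem : MemLp f 2 (volume : Measure ℝ) := hfRmem.ofReal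
  have hfmeas : Measurable f := Complex.measurable_ofReal.comp hfRmeas
  have hfodd : ∀ x : ℝ, f (-x) = -f x := by
    intro x; simp only [hfdef, hfRodd x, Complex.ofReal_neg]
  have hfInt : ∀ a b : ℝ, IntervalIntegrable f volume a b := by
    intro a b
    constructor <;>
    · haveI : IsFiniteMeasure (volume.restrict (Set.Ioc (min a b) (max a b))) := by
        constructor
        rw [Measure.restrict_apply_univ]
        exact measure_Ioc_lt_top
      have h1 : IntegrableOn f (Set.Ioc (min a b) (max a b)) volume :=
        (hfmem.restrict _).integrable one_le_two
      exact h1.mono_set (Set.Ioc_subset_Ioc (by simp [min_le_left, min_le_right])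
        (by simp [le_max_left, le_max_right]))
  have hfInt2 : ∀ (c : ℝ) (a b : ℝ),
      IntervalIntegrable (fun x => Complex.exp (((c * x : ℝ) : ℂ) * Complex.I) * f x)
        volume a b := by
    intro c a b
    rcases hfInt a b with ⟨h1, h2⟩
    have hcont : Continuous fun x : ℝ => Complex.exp (((c * x : ℝ) : ℂ) * Complex.I) := by
      fun_prop
    have hbd : ∃ C, ∀ x : ℝ, ‖Complex.exp (((c * x : ℝ) : ℂ) * Complex.I)‖ ≤ C := by
      refine ⟨1, fun x => ?_⟩
      rw [Complex.norm_exp]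
      simp
    exact ⟨h1.bdd_mul hcont.aestronglyMeasurable (Filter.Eventually.of_forall hbd.choose_spec),
      h2.bdd_mul hcont.aestronglyMeasurable (Filter.Eventually.of_forall hbd.choose_spec)⟩
  have hae_pi : ∀ᵐ x : ℝ, x ≠ π := by
    have h1 : (volume : Measure ℝ) {π} = 0 := measure_singleton π
    have h2 := measure_eq_zero_iff_ae_notMem.mp h1
    filter_upwards [h2] with x hx
    simpa using hx
  have hRint : ∀ n : ℤ, ∫ x in (0:ℝ)..π, Real.sin ((n:ℝ) * x) * fR x = 0 := by
    intro n
    have heq : ∫ x in (0:ℝ)..π, Real.sin ((n:ℝ) * x) * fR x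
        = ∫ x in (0:ℝ)..π, d x * Real.sin ((n:ℝ) * x) := by
      apply intervalIntegral.integral_congr_ae
      filter_upwards [hae_pi] with x hxne hx
      rw [Set.uIoc_of_le pi_pos.le, Set.mem_Ioc] at hx
      rw [hfRIoo x ⟨hx.1, lt_of_le_of_ne hx.2 hxne⟩, mul_comm]
    rw [heq, hint n]
  have hexp : ∀ n : ℤ,
      (∫ x in (-π)..π, Complex.exp ((((-(n:ℝ)) * x : ℝ) : ℂ) * Complex.I) * f x) = 0 := by
    intro n
    set ν : ℝ := (n : ℝ) with hν
    set E : ℝ → ℂ := fun x => Complex.exp ((((-ν) * x : ℝ) : ℂ) * Complex.I) * f x with hE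
    have hEneg : ∀ x : ℝ, E (-x) = -(Complex.exp (((ν * x : ℝ) : ℂ) * Complex.I) * f x) := by
      intro x
      simp only [hE]
      rw [neg_mul_neg, hfodd]
      ring
    have h2 : ∫ x in (-π)..π, E x = (∫ x in (-π)..(0:ℝ), E x) + ∫ x in (0:ℝ)..π, E x :=
      (intervalIntegral.integral_add_adjacent_intervals (hfInt2 (-ν) (-π) 0)
        (hfInt2 (-ν) 0 π)).symm
    have h1 : ∫ x in (-π)..(0:ℝ), E x = ∫ x in (0:ℝ)..π, E (-x) := by
      rw [intervalIntegral.integral_comp_neg E]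
      norm_num
    have h3 : ∫ x in (0:ℝ)..π, E (-x)
        = -∫ x in (0:ℝ)..π, Complex.exp (((ν * x : ℝ) : ℂ) * Complex.I) * f x := by
      simp only [hEneg]
      exact intervalIntegral.integral_neg
    have h4 : ∫ x in (-π)..π, E x
        = ∫ x in (0:ℝ)..π,
            (Complex.exp ((((-ν) * x : ℝ) : ℂ) * Complex.I) * f x
              - Complex.exp (((ν * x : ℝ) : ℂ) * Complex.I) * f x) := by
      rw [h2, h1, h3, intervalIntegral.integral_sub (hfInt2 (-ν) 0 π) (hfInt2 ν 0 π)]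
      ring
    have hptwise : ∀ x : ℝ,
        Complex.exp ((((-ν) * x : ℝ) : ℂ) * Complex.I) * f x
          - Complex.exp (((ν * x : ℝ) : ℂ) * Complex.I) * f x
        = (-2 * Complex.I) * ((Real.sin (ν * x) * fR x : ℝ) : ℂ) := by
      intro x
      have hc : (((-ν) * x : ℝ) : ℂ) = -(((ν * x : ℝ) : ℂ)) := by push_cast; ring
      rw [hc, Complex.exp_mul_I, Complex.exp_mul_I, Complex.cos_neg, Complex.sin_neg,
        ← Complex.ofReal_sin]
      simp only [hfdef]
      push_cast
      ring
    rw [h4]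
    calc (∫ x in (0:ℝ)..π,
            (Complex.exp ((((-ν) * x : ℝ) : ℂ) * Complex.I) * f x
              - Complex.exp (((ν * x : ℝ) : ℂ) * Complex.I) * f x))
        = ∫ x in (0:ℝ)..π, (-2 * Complex.I) * ((Real.sin (ν * x) * fR x : ℝ) : ℂ) := by
          exact intervalIntegral.integral_congr fun x _ => hptwise x
      _ = (-2 * Complex.I) * ∫ x in (0:ℝ)..π, ((Real.sin (ν * x) * fR x : ℝ) : ℂ) := by
          exact intervalIntegral.integral_const_mul _ _
      _ = 0 := by
          rw [intervalIntegral.integral_ofReal, hRint n]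
          simp
  -- lift to the additive circle
  set F := AddCircle.liftIoc (2*π) (-π) f with hFdef
  have hFmeas : Measurable F := by
    have hFeq : F = fun y => f ((AddCircle.equivIoc (2*π) (-π) y : ℝ)) := rfl
    rw [hFeq]
    exact hfmeas.comp (measurable_subtype_coe.comp
      (AddCircle.measurableEquivIoc (2*π) (-π)).measurable)
  have hFcirc : ∀ x ∈ Set.Ioc (-π) (-π + 2*π), F ((x : ℝ) : AddCircle (2*π)) = f x :=
    fun x hx => AddCircle.liftIoc_coe_apply hx
  have hmk := AddCircle.measurePreserving_mk (2*π) (-π)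
  have hFmk : (fun x : ℝ => F ((x : ℝ) : AddCircle (2*π)))
      =ᵐ[volume.restrict (Set.Ioc (-π) (-π + 2*π))] f := by
    filter_upwards [ae_restrict_mem measurableSet_Ioc] with x hx
    exact hFcirc x hx
  have hFvol : MemLp F 2 (volume : Measure (AddCircle (2*π))) := by
    rw [← hmk.map_eq]
    rw [memLp_map_measure_iff hFmeas.stronglyMeasurable.aestronglyMeasurable
      AddCircle.measurable_mk'.aemeasurable]
    exact (hfmem.restrict _).ae_eq hFmk.symm
  have hhaar_eq : (AddCircle.haarAddCircle : Measure (AddCircle (2*π)))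
      = (ENNReal.ofReal (2*π))⁻¹ • (volume : Measure (AddCircle (2*π))) := by
    rw [AddCircle.volume_eq_smul_haarAddCircle, smul_smul,
      ENNReal.inv_mul_cancel (ne_of_gt (ENNReal.ofReal_pos.mpr (by positivity)))
        ENNReal.ofReal_ne_top, one_smul]
  have hFhaar : MemLp F 2 (AddCircle.haarAddCircle (T := 2*π)) := by
    rw [hhaar_eq]
    exact hFvol.smul_measure (ENNReal.inv_ne_top.mpr
      (ne_of_gt (ENNReal.ofReal_pos.mpr (by positivity))))
  -- all Fourier coefficients vanish
  have hcoeff : ∀ n : ℤ, fourierCoeff F n = 0 := by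
    intro n
    rw [hFdef, fourierCoeff_liftIoc_eq, fourierCoeffOn_eq_integral]
    have hinteg : ∀ x : ℝ, (fourier (-n) (x : AddCircle (-π + 2*π - -π))) • f x
        = Complex.exp ((((-(n:ℝ)) * x : ℝ) : ℂ) * Complex.I) * f x := by
      intro x
      rw [fourier_coe_apply, smul_eq_mul]
      have hπ : ((π : ℝ) : ℂ) ≠ 0 := Complex.ofReal_ne_zero.mpr Real.pi_ne_zero
      congr 1
      push_cast
      congr 1
      rw [show (-(π:ℂ) + 2 * ↑π - -↑π) = 2 * ↑π by ring,
        div_eq_iff (mul_ne_zero two_ne_zero hπ)]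
      ring
    rw [intervalIntegral.integral_congr fun x _ => hinteg x]
    rw [show (-π + 2*π : ℝ) = π by ring, hexp n, smul_zero]
  -- conclude F = 0 in L²
  have hzero : hFhaar.toLp F = 0 := by
    apply (fourierBasis (T := 2*π)).repr.injective
    refine lp.ext ?_
    funext n
    rw [map_zero]
    have hc : fourierCoeff ((hFhaar.toLp F : _) : AddCircle (2*π) → ℂ) n = fourierCoeff F n := by
      unfold fourierCoeff
      exact integral_congr_ae (by
        filter_upwards [hFhaar.coeFn_toLp] with t ht
        rw [ht])
    rw [fourierBasis_repr, hc, hcoeff n]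
    simp
  have hF0 : F =ᵐ[AddCircle.haarAddCircle (T := 2*π)] 0 := by
    have h1 := hFhaar.coeFn_toLp
    rw [hzero] at h1
    have h2 := Lp.coeFn_zero ℂ 2 (AddCircle.haarAddCircle (T := 2*π))
    exact (h2.symm.trans h1).symm
  have hFvol0 : F =ᵐ[(volume : Measure (AddCircle (2*π)))] 0 := by
    rw [AddCircle.volume_eq_smul_haarAddCircle]
    exact Measure.ae_smul_measure hF0 _
  have hpull : (fun x : ℝ => F ((x : ℝ) : AddCircle (2*π)))
      =ᵐ[volume.restrict (Set.Ioc (-π) (-π + 2*π))] (fun _ => 0) := by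
    have h1 := hmk.quasiMeasurePreserving.ae_eq_comp hFvol0
    filter_upwards [h1] with x hx
    simpa using hx
  have hf0 : f =ᵐ[volume.restrict (Set.Ioc (-π) (-π + 2*π))] (fun _ => 0) := by
    filter_upwards [hpull, ae_restrict_mem measurableSet_Ioc] with x h1 h2
    rw [← hFcirc x h2]
    exact h1
  have hsub : Set.Ioo (0:ℝ) π ⊆ Set.Ioc (-π) (-π + 2*π) := by
    rintro x ⟨u, v⟩
    have := pi_pos
    exact ⟨by linarith, by linarith⟩
  have hd0 : ∀ᵐ t ∂μ₀, d t = 0 := by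
    have h1 := ae_restrict_of_ae_restrict_of_subset hsub hf0
    filter_upwards [h1, ae_restrict_mem measurableSet_Ioo] with t h2 h3
    have h4 : fR t = 0 := by
      have h5 : (fR t : ℂ) = 0 := h2
      exact_mod_cast h5
    rw [← hfRIoo t h3]
    exact h4
  filter_upwards [hgd, hd0] with t h1 h2
  rw [h1, h2]

open MeasureTheory Real

theorem stmt_16 (m : ℕ) (a : Fin m → ℝ)
    (ha : StrictMono a) (ha0 : ∀ k, 0 < a k) (haπ : ∀ k, a k < π)
    (hsin : ∀ n : ℕ, 1 ≤ n → (∑ k, Real.sin (n * a k)) ≠ 0)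
    (q₁ q₂ : ℝ → ℝ)
    (hq₁ : MemLp q₁ 2 (volume.restrict (Set.Ioo 0 π)))
    (hq₂ : MemLp q₂ 2 (volume.restrict (Set.Ioo 0 π)))
    (N₁ N₂ : ℝ → ℝ)
    (hN₁ : ∀ ρ : ℝ, ∫ x in (0:ℝ)..π, N₁ x * Real.cos (ρ * x) =
      -Real.sin (ρ * π) * ∑ k, (∫ t in (0:ℝ)..(a k), q₁ t * Real.sin (ρ * (a k - t)))
        + (∑ k, Real.sin (ρ * a k)) * ∫ t in (0:ℝ)..π, q₁ t * Real.sin (ρ * (π - t)))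
    (hN₂ : ∀ ρ : ℝ, ∫ x in (0:ℝ)..π, N₂ x * Real.cos (ρ * x) =
      -Real.sin (ρ * π) * ∑ k, (∫ t in (0:ℝ)..(a k), q₂ t * Real.sin (ρ * (a k - t)))
        + (∑ k, Real.sin (ρ * a k)) * ∫ t in (0:ℝ)..π, q₂ t * Real.sin (ρ * (π - t)))
    (hdata : ∀ n : ℕ, (∫ x in (0:ℝ)..π, N₁ x * Real.cos (n * x)) =
      ∫ x in (0:ℝ)..π, N₂ x * Real.cos (n * x)) :
    (∀ n : ℕ, 1 ≤ n →
      (∫ t in (0:ℝ)..π, q₁ t * Real.sin (n * (π - t))) =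
        (∑ k, Real.sin (n * a k))⁻¹ * ∫ x in (0:ℝ)..π, N₁ x * Real.cos (n * x)) ∧
    ∀ᵐ t ∂(volume.restrict (Set.Ioo 0 π)), q₁ t = q₂ t := by
  haveI : IsFiniteMeasure (volume.restrict (Set.Ioo (0:ℝ) π)) := by
    constructor
    rw [Measure.restrict_apply_univ]
    exact measure_Ioo_lt_top
  have hIooIoc : volume.restrict (Set.Ioo (0:ℝ) π) = volume.restrict (Set.Ioc 0 π) :=
    Measure.restrict_congr_set Ioo_ae_eq_Ioc
  have hqint : ∀ (q : ℝ → ℝ), MemLp q 2 (volume.restrict (Set.Ioo 0 π)) →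
      ∀ (c : ℝ → ℝ), Continuous c →
      IntervalIntegrable (fun t => q t * c t) volume 0 π := by
    intro q hq c hc
    rw [intervalIntegrable_iff_integrableOn_Ioc_of_le pi_pos.le]
    have h1 : Integrable q (volume.restrict (Set.Ioc 0 π)) := by
      rw [← hIooIoc]; exact hq.integrable one_le_two
    have hcb : ∃ C, ∀ x ∈ Set.Icc (0:ℝ) π, |c x| ≤ C := by
      obtain ⟨C, hC⟩ := (isCompact_Icc (a := (0:ℝ)) (b := π)).exists_bound_of_continuousOn
        hc.continuousOn
      exact ⟨C, fun x hx => by simpa using hC x hx⟩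
    obtain ⟨C, hC⟩ := hcb
    have h2 : Integrable (fun t => c t * q t) (volume.restrict (Set.Ioc 0 π)) := by
      apply Integrable.bdd_mul h1 hc.aestronglyMeasurable
      filter_upwards [ae_restrict_mem measurableSet_Ioc] with x hx
      exact (by simpa using hC x ⟨le_of_lt hx.1, hx.2⟩ : ‖c x‖ ≤ C)
    exact h2.congr (Filter.Eventually.of_forall fun t => mul_comm _ _)
  have hc1 : ∀ n : ℕ, 1 ≤ n →
      (∫ t in (0:ℝ)..π, q₁ t * Real.sin (n * (π - t))) =
        (∑ k, Real.sin (n * a k))⁻¹ * ∫ x in (0:ℝ)..π, N₁ x * Real.cos (n * x) := by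
    intro n hn
    have h1 := hN₁ (n : ℝ)
    rw [Real.sin_nat_mul_pi] at h1
    rw [h1, neg_zero, zero_mul, zero_add, inv_mul_cancel_left₀ (hsin n hn)]
  refine ⟨hc1, ?_⟩
  have hg : MemLp (fun t => q₁ t - q₂ t) 2 (volume.restrict (Set.Ioo 0 π)) := hq₁.sub hq₂
  have hkey : ∀ n : ℕ, 1 ≤ n →
      ∫ t in (0:ℝ)..π, (q₁ t - q₂ t) * Real.sin (n * t) = 0 := by
    intro n hn
    have e₁ := hc1 n hn
    have e₂ : (∫ t in (0:ℝ)..π, q₂ t * Real.sin (n * (π - t))) =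
        (∑ k, Real.sin (n * a k))⁻¹ * ∫ x in (0:ℝ)..π, N₂ x * Real.cos (n * x) := by
      have h1 := hN₂ (n : ℝ)
      rw [Real.sin_nat_mul_pi] at h1
      rw [h1, neg_zero, zero_mul, zero_add, inv_mul_cancel_left₀ (hsin n hn)]
    have hI : (∫ t in (0:ℝ)..π, q₁ t * Real.sin (n * (π - t)))
        = ∫ t in (0:ℝ)..π, q₂ t * Real.sin (n * (π - t)) := by
      rw [e₁, e₂, hdata n]
    have hcont : Continuous fun t : ℝ => Real.sin ((n:ℝ) * (π - t)) := by fun_prop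
    have hs : ∫ t in (0:ℝ)..π, (q₁ t - q₂ t) * Real.sin ((n:ℝ) * (π - t)) = 0 := by
      have hi₁ := hqint q₁ hq₁ _ hcont
      have hi₂ := hqint q₂ hq₂ _ hcont
      simp only [sub_mul]
      rw [intervalIntegral.integral_sub hi₁ hi₂, hI, sub_self]
    have hptw : ∀ t : ℝ, (q₁ t - q₂ t) * Real.sin ((n:ℝ) * (π - t))
        = (-((-1:ℝ)^n)) * ((q₁ t - q₂ t) * Real.sin ((n:ℝ) * t)) := by
      intro t
      rw [mul_sub, Real.sin_nat_mul_pi_sub]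
      ring
    rw [intervalIntegral.integral_congr (fun t _ => hptw t),
      intervalIntegral.integral_const_mul] at hs
    rcases mul_eq_zero.mp hs with h' | h'
    · exfalso
      have : ((-1:ℝ))^n ≠ 0 := pow_ne_zero n (by norm_num)
      simp only [neg_eq_zero] at h'
      exact this h'
    · exact h'
  have hconc := aux_sine_complete (fun t => q₁ t - q₂ t) hg hkey
  filter_upwards [hconc] with t ht
  have : q₁ t - q₂ t = 0 := ht
  linarith
end
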